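/- The string rewriting system Σ is terminating: there is no infinite sequence of rewriting steps. Specifically, every rewriting rule of Σ strictly decreases words with respect to the lexicographic order induced by the well-ordering x_0 < x_1 < ... < x_n < ... < x_n^{-1} < ... < x_1^{-1} < x_0^{-1} on letters (since rules preserve length, this lexicographic comparison is a well-founded order on words of fixed length). -/

import Mathlib

abbrev Letter := ℕ × Bool
abbrev Word := List Letter

def pos (i : ℕ) : Letter := (i, true)
def neg (i : ℕ) : Letter := (i, false)

/-- The rewriting rules of the system Σ. -/
inductive SigmaRule : Word → Word → Prop
  | cancel (i : ℕ) : SigmaRule [neg i, pos i] [pos i, neg i]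
  | negPos (i j : ℕ) (h : i < j) : SigmaRule [neg i, pos j] [pos (j+1), neg i]
  | posNegInv (i j : ℕ) (h : i < j) : SigmaRule [neg j, pos i] [pos i, neg (j+1)]
  | posPos (i j : ℕ) (h : i < j) : SigmaRule [pos j, pos i] [pos i, pos (j+1)]
  | negNeg (i j : ℕ) (h : i < j) : SigmaRule [neg i, neg j] [neg (j+1), neg i]

/-- One rewriting step: replace an occurrence of a left-hand side by the right-hand side. -/
def Step (u v : Word) : Prop :=
  ∃ a b l r : Word, SigmaRule l r ∧ u = a ++ l ++ b ∧ v = a ++ r ++ b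

/-- A word is Σ-irreducible if no rule applies. -/
def SigmaIrreducible (w : Word) : Prop := ∀ v, ¬ Step w v

/-- Maximal subscript occurring in a positive word (0 for the empty word). -/
def mu (l : List ℕ) : ℕ := l.foldr max 0

/-- The order on letters: `x_0 < x_1 < ⋯ < x_n < ⋯ < x_n⁻¹ < ⋯ < x_1⁻¹ < x_0⁻¹`. -/
def ltLetter (a b : Letter) : Prop :=
  (a.2 = true ∧ b.2 = false) ∨
  (a.2 = true ∧ b.2 = true ∧ a.1 < b.1) ∨
  (a.2 = false ∧ b.2 = false ∧ b.1 < a.1)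

-- helpers
def posCount (w : Word) : ℕ := w.countP (fun x => x.2)
def negCount (w : Word) : ℕ := w.countP (fun x => !x.2)

def inv : Word → ℕ
  | [] => 0
  | x :: t => (if x.2 then 0 else posCount t) + inv t

def posSub (w : Word) : List ℕ := (w.filter (fun x => x.2)).map Prod.fst
def negSub (w : Word) : List ℕ := (w.filter (fun x => !x.2)).map Prod.fst

theorem posCount_append (a b : Word) : posCount (a ++ b) = posCount a + posCount b :=
  List.countP_append

theorem negCount_append (a b : Word) : negCount (a ++ b) = negCount a + negCount b :=
  List.countP_append

theorem inv_append (a b : Word) :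
    inv (a ++ b) = inv a + inv b + negCount a * posCount b := by
  induction a with
  | nil => simp [inv, negCount]
  | cons x a ih =>
    cases hx : x.2 <;>
      simp [inv, hx, ih, posCount_append, negCount, List.countP_cons] <;> ring

theorem inv_expand (a l b : Word) :
    inv (a ++ l ++ b) = inv a + inv l + inv b + negCount a * posCount l +
      negCount a * posCount b + negCount l * posCount b := by
  rw [List.append_assoc, inv_append, inv_append, posCount_append]
  ring

theorem posSub_expand (a l b : Word) :
    posSub (a ++ l ++ b) = posSub a ++ posSub l ++ posSub b := by
  simp [posSub, List.filter_append]

theorem negSub_expand (a l b : Word) :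
    negSub (a ++ l ++ b) = negSub a ++ negSub l ++ negSub b := by
  simp [negSub, List.filter_append]

noncomputable def oval' : List ℕ → Ordinal
  | [] => 0
  | a :: l => Ordinal.omega0 ^ (l.length : Ordinal) * a + oval' l

noncomputable def meas (w : Word) : ℕ × Ordinal × Ordinal :=
  (inv w, oval' (posSub w), oval' (negSub w).reverse)

example (i : ℕ) : inv [neg i, pos i] = 1 := by
  simp [inv, posCount, pos, neg, List.countP_cons]
example (i j : ℕ) : inv [pos i, neg j] = 0 := by
  simp [inv, posCount, pos, neg, List.countP_cons]
example (i j : ℕ) : posSub [pos j, pos i] = [j, i] := by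
  simp [posSub, pos]
example (i j : ℕ) : negSub [neg i, neg j] = [i, j] := by
  simp [negSub, neg, pos]
example (i j : ℕ) : negSub [pos i, neg j] = [j] := by
  simp [negSub, neg, pos]

theorem oval'_lt : ∀ l : List ℕ, oval' l < Ordinal.omega0 ^ (l.length : Ordinal)
  | [] => by simp [oval']
  | a :: l => by
    have h1 := oval'_lt l
    have h3 : oval' (a :: l) < Ordinal.omega0 ^ (l.length : Ordinal) * (a + 1) := by
      rw [mul_add, mul_one]
      exact add_lt_add_right h1 _
    refine h3.trans_le ?_
    have h2 : ((a : Ordinal) + 1) ≤ Ordinal.omega0 := by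
      have := Ordinal.nat_lt_omega0 (a + 1)
      push_cast at this
      exact this.le
    calc Ordinal.omega0 ^ (l.length : Ordinal) * ((a : Ordinal) + 1)
        ≤ Ordinal.omega0 ^ (l.length : Ordinal) * Ordinal.omega0 := mul_le_mul_right h2 _
      _ = Ordinal.omega0 ^ ((l.length : Ordinal) + 1) := by
          rw [Ordinal.opow_add, Ordinal.opow_one]
      _ = Ordinal.omega0 ^ (((a :: l).length : ℕ) : Ordinal) := by congr 1

theorem lex_append_left {α} {r : α → α → Prop} (p : List α) {x y : List α}
    (h : List.Lex r x y) : List.Lex r (p ++ x) (p ++ y) := by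
  induction p with
  | nil => exact h
  | cons a p ih => exact List.Lex.cons ih

theorem lex_append_right {α} {r : α → α → Prop} (s : List α) :
    ∀ {x y : List α}, List.Lex r x y → x.length = y.length →
      List.Lex r (x ++ s) (y ++ s) := by
  intro x y h
  induction h with
  | nil => intro hl; simp at hl
  | rel h => intro _; exact List.Lex.rel h
  | cons h ih => intro hl; exact List.Lex.cons (ih (by simpa using hl))

open Ordinal in
theorem oval'_lex : ∀ {l m : List ℕ}, List.Lex (· < ·) l m → l.length = m.length →
    oval' l < oval' m := by
  intro l m h
  induction h with
  | nil => intro hl; simp at hl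
  | @rel a l b m hab =>
    intro hl
    simp only [List.length_cons, add_left_inj] at hl
    show omega0 ^ (l.length : Ordinal) * a + oval' l
        < omega0 ^ (m.length : Ordinal) * b + oval' m
    rw [← hl]
    have h1 : omega0 ^ (l.length : Ordinal) * a + oval' l
        < omega0 ^ (l.length : Ordinal) * (a + 1) := by
      rw [mul_add, mul_one]; exact add_lt_add_right (oval'_lt l) _
    refine h1.trans_le (le_trans ?_ le_self_add)
    apply mul_le_mul_right
    have h2 : ((a + 1 : ℕ) : Ordinal) ≤ (b : ℕ) := by
      exact_mod_cast Nat.cast_le.mpr hab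
    push_cast at h2
    exact h2
  | @cons a l m hlm ih =>
    intro hl
    simp only [List.length_cons, add_left_inj] at hl
    show omega0 ^ (l.length : Ordinal) * a + oval' l
        < omega0 ^ (m.length : Ordinal) * a + oval' m
    rw [hl]
    exact add_lt_add_right (ih hl) _

theorem step_meas {u v : Word} (h : Step u v) :
    Prod.Lex (· < ·) (Prod.Lex (· < ·) (· < ·)) (meas v) (meas u) := by
  obtain ⟨a, b, l, r, hrule, rfl, rfl⟩ := h
  cases hrule with
  | cancel i =>
    apply Prod.Lex.left
    rw [inv_expand, inv_expand]
    simp [inv, posCount, negCount, pos, neg, List.countP_cons]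
  | negPos i j h =>
    apply Prod.Lex.left
    rw [inv_expand, inv_expand]
    simp [inv, posCount, negCount, pos, neg, List.countP_cons]
  | posNegInv i j h =>
    apply Prod.Lex.left
    rw [inv_expand, inv_expand]
    simp [inv, posCount, negCount, pos, neg, List.countP_cons]
  | posPos i j h =>
    have he : inv (a ++ [pos i, pos (j+1)] ++ b) = inv (a ++ [pos j, pos i] ++ b) := by
      rw [inv_expand, inv_expand]
      simp [inv, posCount, negCount, pos, neg, List.countP_cons]
    simp only [meas, he]
    apply Prod.Lex.right
    apply Prod.Lex.left
    have h1 : posSub (a ++ [pos i, pos (j+1)] ++ b)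
        = posSub a ++ ([i, j+1] ++ posSub b) := by
      rw [posSub_expand]
      simp [posSub, pos, List.append_assoc]
    have h2 : posSub (a ++ [pos j, pos i] ++ b)
        = posSub a ++ ([j, i] ++ posSub b) := by
      rw [posSub_expand]
      simp [posSub, pos, List.append_assoc]
    rw [h1, h2]
    exact oval'_lex (lex_append_left _ (lex_append_right _ (List.Lex.rel h) rfl)) (by simp)
  | negNeg i j h =>
    have he : inv (a ++ [neg (j+1), neg i] ++ b) = inv (a ++ [neg i, neg j] ++ b) := by
      rw [inv_expand, inv_expand]
      simp [inv, posCount, negCount, pos, neg, List.countP_cons]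
    have hp : posSub (a ++ [neg (j+1), neg i] ++ b) = posSub (a ++ [neg i, neg j] ++ b) := by
      rw [posSub_expand, posSub_expand]
      simp [posSub, pos, neg]
    simp only [meas, he, hp]
    apply Prod.Lex.right
    apply Prod.Lex.right
    have h1 : (negSub (a ++ [neg (j+1), neg i] ++ b)).reverse
        = (negSub b).reverse ++ ([i, j+1] ++ (negSub a).reverse) := by
      rw [negSub_expand]
      simp [negSub, neg, List.reverse_append, List.append_assoc]
    have h2 : (negSub (a ++ [neg i, neg j] ++ b)).reverse
        = (negSub b).reverse ++ ([j, i] ++ (negSub a).reverse) := by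
      rw [negSub_expand]
      simp [negSub, neg, List.reverse_append, List.append_assoc]
    rw [h1, h2]
    exact oval'_lex (lex_append_left _ (lex_append_right _ (List.Lex.rel h) rfl)) (by simp)


/-- Every rewriting step strictly decreases words in the lexicographic order induced by
`ltLetter`, and the rewriting system Σ is terminating: there is no infinite sequence of
rewriting steps. -/
theorem sigma_terminating :
    (∀ u v : Word, Step u v → List.Lex ltLetter v u) ∧
    ¬ ∃ f : ℕ → Word, ∀ k : ℕ, Step (f k) (f (k + 1)) := by
  constructor
  · rintro u v ⟨a, b, l, r, hrule, rfl, rfl⟩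
    rw [List.append_assoc, List.append_assoc]
    apply lex_append_left
    cases hrule with
    | cancel i => exact List.Lex.rel (Or.inl ⟨rfl, rfl⟩)
    | negPos i j h => exact List.Lex.rel (Or.inl ⟨rfl, rfl⟩)
    | posNegInv i j h => exact List.Lex.rel (Or.inl ⟨rfl, rfl⟩)
    | posPos i j h => exact List.Lex.rel (Or.inr (Or.inl ⟨rfl, rfl, h⟩))
    | negNeg i j h =>
      exact List.Lex.rel (Or.inr (Or.inr ⟨rfl, rfl, Nat.lt_succ_of_lt h⟩))
  · rintro ⟨f, hf⟩
    have wf : WellFounded (Prod.Lex ((· < ·) : ℕ → ℕ → Prop)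
        (Prod.Lex ((· < ·) : Ordinal.{0} → Ordinal.{0} → Prop) ((· < ·) : Ordinal.{0} → Ordinal.{0} → Prop))) :=
      WellFounded.prod_lex (Nat.lt_wfRel.wf)
        (WellFounded.prod_lex Ordinal.lt_wf Ordinal.lt_wf)
    obtain ⟨x, ⟨k, rfl⟩, hmin⟩ :=
      wf.has_min (Set.range fun k => meas (f k)) ⟨_, ⟨0, rfl⟩⟩
    exact hmin _ ⟨k + 1, rfl⟩ (step_meas (hf k))
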